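/- Fix p ≥ 1, α ≥ 1 and L > 0. There exist constants c > 0 and d₀ ≥ 1, depending only on p, α and L, such that the following holds for every integer d ≥ d₀. Let μ ∈ ℝ^d satisfy ‖μ‖ = 7√d, and let ψ : ℝ^d → [0,1] be an L-Lipschitz function with ψ(y) = 1 whenever ‖y‖ ≤ 4 and ψ(y) = 0 whenever ‖y‖ ≥ 5. Define the score estimate ŝ : ℝ^d → ℝ^d by ŝ(x) = −ψ(x/√d)·αx − (1 − ψ(x/√d))·(x − μ) (so that ŝ(x) = −αx for ‖x‖ ≤ 4√d and ŝ(x) = −(x − μ) for ‖x‖ ≥ 5√d). Then the L^p score estimation error satisfies (∫ ‖ŝ(x) + (x − μ)‖^p dN(μ, I_d)(x))^{1/p} ≤ e^{−c·d}. -/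

import Mathlib

set_option maxHeartbeats 1000000


open MeasureTheory
open scoped NNReal ENNReal

/-- The standard Gaussian probability measure `γ_d` on `ℝ^d`, given by its density
`(2π)^{-d/2} exp(-‖x‖²/2)` with respect to Lebesgue measure. -/
noncomputable def stdGaussian (d : ℕ) : Measure (EuclideanSpace ℝ (Fin d)) :=
  volume.withDensity fun x =>
    ENNReal.ofReal ((2 * Real.pi) ^ (-(d : ℝ) / 2) * Real.exp (-‖x‖ ^ 2 / 2))

lemma aux_int_quarter (d : ℕ) :
    Integrable (fun x : EuclideanSpace ℝ (Fin d) => Real.exp (-(1/4 : ℝ) * ‖x‖ ^ 2)) := by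
  have h := (GaussianFourier.integrable_cexp_neg_mul_sq_norm_add (b := (1/4 : ℂ)) (by norm_num) 0
      (0 : EuclideanSpace ℝ (Fin d))).norm
  simpa [Complex.norm_exp, ← Complex.ofReal_pow] using h

lemma aux_integrable (d : ℕ) :
    Integrable (fun x : EuclideanSpace ℝ (Fin d) => Real.exp (‖x‖ ^ 2 / 4)) (stdGaussian d) := by
  rw [stdGaussian, integrable_withDensity_iff (by fun_prop)
    (Filter.Eventually.of_forall fun x => ENNReal.ofReal_lt_top)]
  have : (fun x : EuclideanSpace ℝ (Fin d) => Real.exp (‖x‖ ^ 2 / 4) *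
      (ENNReal.ofReal ((2 * Real.pi) ^ (-(d : ℝ) / 2) * Real.exp (-‖x‖ ^ 2 / 2))).toReal)
      = fun x : EuclideanSpace ℝ (Fin d) =>
        (2 * Real.pi) ^ (-(d : ℝ) / 2) * Real.exp (-(1/4 : ℝ) * ‖x‖ ^ 2) := by
    funext x
    rw [ENNReal.toReal_ofReal (by positivity), show Real.exp (‖x‖ ^ 2 / 4) *
      ((2 * Real.pi) ^ (-(d:ℝ) / 2) * Real.exp (-‖x‖ ^ 2 / 2)) = (2 * Real.pi) ^ (-(d:ℝ) / 2) *
      (Real.exp (‖x‖ ^ 2 / 4) * Real.exp (-‖x‖ ^ 2 / 2)) from by ring, ← Real.exp_add]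
    congr 2
    ring
  rw [this]
  exact (aux_int_quarter d).const_mul _

lemma aux_integral (d : ℕ) :
    ∫ x, Real.exp (‖x‖ ^ 2 / 4) ∂(stdGaussian d) = 2 ^ ((d : ℝ) / 2) := by
  have hmeas : Measurable fun x : EuclideanSpace ℝ (Fin d) =>
      Real.toNNReal ((2 * Real.pi) ^ (-(d : ℝ) / 2) * Real.exp (-‖x‖ ^ 2 / 2)) := by fun_prop
  rw [stdGaussian]
  rw [show (fun x : EuclideanSpace ℝ (Fin d) =>
      ENNReal.ofReal ((2 * Real.pi) ^ (-(d : ℝ) / 2) * Real.exp (-‖x‖ ^ 2 / 2)))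
      = fun x => ((Real.toNNReal ((2 * Real.pi) ^ (-(d : ℝ) / 2) * Real.exp (-‖x‖ ^ 2 / 2)) : ℝ≥0)
        : ℝ≥0∞) from rfl]
  rw [integral_withDensity_eq_integral_smul hmeas]
  have : (fun x : EuclideanSpace ℝ (Fin d) =>
      (Real.toNNReal ((2 * Real.pi) ^ (-(d : ℝ) / 2) * Real.exp (-‖x‖ ^ 2 / 2)))
        • Real.exp (‖x‖ ^ 2 / 4))
      = fun x : EuclideanSpace ℝ (Fin d) =>
        (2 * Real.pi) ^ (-(d : ℝ) / 2) * Real.exp (-(1/4 : ℝ) * ‖x‖ ^ 2) := by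
    funext x
    rw [NNReal.smul_def, Real.coe_toNNReal _ (by positivity), smul_eq_mul, show
      (2 * Real.pi) ^ (-(d:ℝ) / 2) * Real.exp (-‖x‖ ^ 2 / 2) * Real.exp (‖x‖ ^ 2 / 4)
      = (2 * Real.pi) ^ (-(d:ℝ) / 2) *
      (Real.exp (-‖x‖ ^ 2 / 2) * Real.exp (‖x‖ ^ 2 / 4)) from by ring, ← Real.exp_add]
    congr 2
    ring
  rw [this, integral_const_mul, GaussianFourier.integral_rexp_neg_mul_sq_norm
    (by norm_num : (0:ℝ) < 1/4)]
  rw [finrank_euclideanSpace_fin]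
  have hpi : (0:ℝ) < Real.pi := Real.pi_pos
  rw [show -(d:ℝ)/2 = -((d:ℝ)/2) from by ring, Real.rpow_neg (by positivity),
    inv_mul_eq_div, ← Real.div_rpow (by positivity) (by positivity)]
  rw [show Real.pi / (1/4) / (2 * Real.pi) = 2 from by field_simp; ring]

theorem stmt0 (p α L : ℝ) (hp : 1 ≤ p) (hα : 1 ≤ α) (hL : 0 < L) :
    ∃ c > (0 : ℝ), ∃ d₀ : ℕ, 1 ≤ d₀ ∧
      ∀ d : ℕ, d₀ ≤ d →
      ∀ μ : EuclideanSpace ℝ (Fin d), ‖μ‖ = 7 * Real.sqrt d →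
      ∀ ψ : EuclideanSpace ℝ (Fin d) → ℝ,
        (∀ x y, |ψ x - ψ y| ≤ L * ‖x - y‖) →
        (∀ y, ψ y ∈ Set.Icc (0 : ℝ) 1) →
        (∀ y, ‖y‖ ≤ 4 → ψ y = 1) →
        (∀ y, 5 ≤ ‖y‖ → ψ y = 0) →
        ∀ sHat : EuclideanSpace ℝ (Fin d) → EuclideanSpace ℝ (Fin d),
          (∀ x, sHat x = -(ψ ((Real.sqrt d)⁻¹ • x) • (α • x))
              - (1 - ψ ((Real.sqrt d)⁻¹ • x)) • (x - μ)) →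
          (∫ x, ‖sHat x + (x - μ)‖ ^ p ∂((stdGaussian d).map (· + μ))) ^ (1 / p)
            ≤ Real.exp (-c * d) := by
  have hp0 : (0:ℝ) < p := lt_of_lt_of_le one_pos hp
  have hα0 : (0:ℝ) < α := lt_of_lt_of_le one_pos hα
  set κ : ℝ := (1 - Real.log 2) / 4 with hκdef
  have hκ : 0 < κ := by
    have := Real.log_two_lt_d9
    rw [hκdef]; linarith
  refine ⟨κ / p, by positivity, ⌈(10*α*p/κ)^2⌉₊ + ⌈4*p^2/κ⌉₊ + 1, le_add_self, ?_⟩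
  intro d hd μ hμ ψ hψL hψ01 hψ1 hψ0 sHat hsHat
  have hd1 : (1:ℝ) ≤ (d:ℝ) := by
    have : 1 ≤ d := le_trans le_add_self hd
    exact_mod_cast this
  have hdA : ((10*α*p/κ)^2 : ℝ) ≤ (d:ℝ) := by
    refine le_trans (Nat.le_ceil _) ?_
    have : ⌈(10*α*p/κ)^2⌉₊ ≤ d := le_trans (by omega) hd
    exact_mod_cast this
  have hdB : (4*p^2/κ : ℝ) ≤ (d:ℝ) := by
    refine le_trans (Nat.le_ceil _) ?_
    have : ⌈4*p^2/κ⌉₊ ≤ d := le_trans (by omega) hd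
    exact_mod_cast this
  have hsd : 0 < Real.sqrt d := Real.sqrt_pos.mpr (by linarith)
  set S : ℝ := Real.sqrt d with hSdef
  set K : ℝ := Real.exp (2*p^2 + 5*α*p*S - (d:ℝ)/2) with hKdef
  set H : EuclideanSpace ℝ (Fin d) → ℝ := fun x => K * Real.exp (‖x - μ‖^2/4) with hHdef
  have hHcont : Continuous H := by
    apply continuous_const.mul
    exact Real.continuous_exp.comp (((continuous_id.sub continuous_const).norm.pow 2).div_const 4)
  -- pointwise bound
  have hpt : ∀ x, ‖sHat x + (x - μ)‖ ^ p ≤ H x := by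
    intro x
    have hrew : sHat x + (x - μ) = ψ ((Real.sqrt d)⁻¹ • x) • ((x - μ) - α • x) := by
      rw [hsHat x]; module
    set w : EuclideanSpace ℝ (Fin d) := (Real.sqrt d)⁻¹ • x with hwdef
    by_cases h5 : 5 ≤ ‖w‖
    · rw [hrew, hψ0 w h5, zero_smul, norm_zero, Real.zero_rpow (by positivity)]
      positivity
    · push_neg at h5
      have hwnorm : ‖w‖ = (Real.sqrt d)⁻¹ * ‖x‖ := by
        rw [hwdef, norm_smul, Real.norm_eq_abs, abs_of_pos (inv_pos.mpr hsd)]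
      have h5' : (Real.sqrt d)⁻¹ * ‖x‖ < 5 := hwnorm ▸ h5
      have hxn : ‖x‖ < 5 * S := by
        calc ‖x‖ = Real.sqrt d * ((Real.sqrt d)⁻¹ * ‖x‖) := by
              field_simp
          _ < Real.sqrt d * 5 := by exact mul_lt_mul_of_pos_left h5' hsd
          _ = 5 * S := mul_comm _ _
      have hxμ : 2 * S ≤ ‖x - μ‖ := by
        have h1 : ‖μ‖ - ‖x‖ ≤ ‖x - μ‖ := by
          rw [norm_sub_rev]; exact norm_sub_norm_le μ x
        rw [hμ] at h1
        linarith
      set t : ℝ := ‖x - μ‖ with htdef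
      have ht0 : 0 ≤ t := norm_nonneg _
      have hψw := hψ01 w
      have hb1 : ‖sHat x + (x - μ)‖ ≤ t + 5*α*S := by
        rw [hrew, norm_smul, Real.norm_eq_abs, abs_of_nonneg hψw.1]
        have h2 : ‖(x - μ) - α • x‖ ≤ t + α * (5*S) := by
          refine (norm_sub_le _ _).trans ?_
          have h3 : ‖α • x‖ = α * ‖x‖ := by
            rw [norm_smul, Real.norm_eq_abs, abs_of_pos hα0]
          have h4 : α * ‖x‖ ≤ α * (5*S) := mul_le_mul_of_nonneg_left hxn.le hα0.le
          rw [h3]; exact add_le_add (le_refl _) h4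
        calc ψ w * ‖(x - μ) - α • x‖ ≤ 1 * (t + α * (5*S)) :=
              mul_le_mul hψw.2 h2 (norm_nonneg _) one_pos.le
          _ = t + 5*α*S := by ring
      have hu0 : 0 ≤ t + 5*α*S := by positivity
      have hb2 : ‖sHat x + (x - μ)‖ ^ p ≤ (t + 5*α*S) ^ p :=
        Real.rpow_le_rpow (norm_nonneg _) hb1 hp0.le
      have hb3 : (t + 5*α*S) ^ p ≤ Real.exp ((t + 5*α*S) * p) := by
        have he := Real.add_one_le_exp (t + 5*α*S)
        calc (t + 5*α*S) ^ p ≤ (Real.exp (t + 5*α*S)) ^ p :=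
              Real.rpow_le_rpow hu0 (by linarith) hp0.le
          _ = Real.exp ((t + 5*α*S) * p) := (Real.exp_mul _ _).symm
      have htsq : 4*(d:ℝ) ≤ t^2 := by
        have hS2 : S * S = (d:ℝ) := Real.mul_self_sqrt (by linarith)
        nlinarith [hsd, hxμ]
      have hb4 : (t + 5*α*S) * p ≤ 2*p^2 + 5*α*p*S - (d:ℝ)/2 + t^2/4 := by
        nlinarith [sq_nonneg (t - 4*p)]
      calc ‖sHat x + (x - μ)‖ ^ p ≤ Real.exp ((t + 5*α*S) * p) := hb2.trans hb3
        _ ≤ Real.exp (2*p^2 + 5*α*p*S - (d:ℝ)/2 + t^2/4) := Real.exp_le_exp.mpr hb4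
        _ = H x := by rw [hHdef, hKdef]; dsimp only; rw [← Real.exp_add]
  -- integrability and integral of H
  have hmap : AEMeasurable (fun x : EuclideanSpace ℝ (Fin d) => x + μ) (stdGaussian d) :=
    (measurable_add_const μ).aemeasurable
  have hcomp : (H ∘ fun x => x + μ) = fun y : EuclideanSpace ℝ (Fin d) =>
      K * Real.exp (‖y‖^2/4) := by
    funext y; simp [hHdef, add_sub_cancel_right]
  have hHint : Integrable H ((stdGaussian d).map (· + μ)) := by
    rw [integrable_map_measure hHcont.aestronglyMeasurable hmap]
    rw [hcomp]
    exact (aux_integrable d).const_mul K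
  have hmono : (∫ x, ‖sHat x + (x - μ)‖ ^ p ∂((stdGaussian d).map (· + μ)))
      ≤ ∫ x, H x ∂((stdGaussian d).map (· + μ)) :=
    integral_mono_of_nonneg
      (Filter.Eventually.of_forall fun x => Real.rpow_nonneg (norm_nonneg _) p)
      hHint (Filter.Eventually.of_forall hpt)
  have hval : (∫ x, H x ∂((stdGaussian d).map (· + μ))) = K * 2 ^ ((d:ℝ)/2) := by
    rw [integral_map hmap hHcont.aestronglyMeasurable]
    have : (fun x => H (x + μ)) = fun y : EuclideanSpace ℝ (Fin d) =>
        K * Real.exp (‖y‖^2/4) := hcomp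
    rw [this, integral_const_mul, aux_integral d]
  -- final bound
  have hSge : 10*α*p/κ ≤ S := by
    have h1 : Real.sqrt ((10*α*p/κ)^2) ≤ Real.sqrt d := Real.sqrt_le_sqrt hdA
    rwa [Real.sqrt_sq (by positivity)] at h1
  have hS2 : S * S = (d:ℝ) := Real.mul_self_sqrt (by linarith)
  have hSbound : 5*α*p*S ≤ κ/2 * (d:ℝ) := by
    have h2 : 10*α*p/κ * S ≤ S * S := mul_le_mul_of_nonneg_right hSge hsd.le
    rw [hS2] at h2
    have h3 : 10*α*p*S ≤ κ * (d:ℝ) := by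
      rw [div_mul_eq_mul_div, div_le_iff₀ hκ] at h2
      nlinarith
    linarith
  have hKbound : K * 2 ^ ((d:ℝ)/2) ≤ Real.exp (-(κ) * d) := by
    rw [Real.rpow_def_of_pos two_pos, hKdef, ← Real.exp_add, Real.exp_le_exp]
    have hexp : 2*p^2 ≤ κ/2 * (d:ℝ) := by
      rw [div_le_iff₀ hκ] at hdB
      nlinarith
    rw [hκdef] at hexp hSbound ⊢
    nlinarith
  have hnn : 0 ≤ ∫ x, ‖sHat x + (x - μ)‖ ^ p ∂((stdGaussian d).map (· + μ)) :=
    integral_nonneg fun x => Real.rpow_nonneg (norm_nonneg _) p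
  have hle : (∫ x, ‖sHat x + (x - μ)‖ ^ p ∂((stdGaussian d).map (· + μ)))
      ≤ Real.exp (-(κ) * d) := hmono.trans (hval ▸ hKbound)
  calc (∫ x, ‖sHat x + (x - μ)‖ ^ p ∂((stdGaussian d).map (· + μ))) ^ (1/p)
      ≤ (Real.exp (-(κ) * d)) ^ (1/p) := Real.rpow_le_rpow hnn hle (by positivity)
    _ = Real.exp (-(κ) * d * (1/p)) := (Real.exp_mul _ _).symm
    _ = Real.exp (-(κ/p) * d) := by congr 1; field_simp
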